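/- Let X be a Hilbert space, S₁, S₂ nonempty closed convex disjoint sets, α₁, α₂ > 0 with α₁+α₂ = 1, and p > 1. Then the set A of minimizers of x ↦ α₁ d(x,S₁)^p + α₂ d(x,S₂)^p is disjoint from S₁ ∪ S₂. -/

import Mathlib

open Metric

lemma aux_scalar (α₁ α₂ : ℝ) (hα₁ : 0 < α₁) (hα₂ : 0 < α₂) (p : ℝ) (hp : 1 < p) :
    ∃ t : ℝ, 0 < t ∧ t < 1 ∧ α₁ * t ^ p + α₂ * (1 - t) ^ p < α₂ := by
  set t₀ : ℝ := (α₂ / α₁) ^ (p - 1)⁻¹ with ht₀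
  have hq : (0:ℝ) < p - 1 := by linarith
  have ht₀pos : 0 < t₀ := Real.rpow_pos_of_pos (by positivity) _
  set t : ℝ := min (1/2) (t₀ / 2) with htdef
  have htpos : 0 < t := lt_min (by norm_num) (by positivity)
  have ht1 : t < 1 := lt_of_le_of_lt (min_le_left _ _) (by norm_num)
  refine ⟨t, htpos, ht1, ?_⟩
  have hkey : α₁ * t ^ (p - 1) < α₂ := by
    have h1 : t < t₀ := lt_of_le_of_lt (min_le_right _ _) (by linarith)
    have h2 : t ^ (p - 1) < t₀ ^ (p - 1) := Real.rpow_lt_rpow htpos.le h1 hq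
    have h3 : t₀ ^ (p - 1) = α₂ / α₁ := Real.rpow_inv_rpow (by positivity) hq.ne'
    rw [h3] at h2
    calc α₁ * t ^ (p-1) < α₁ * (α₂ / α₁) := by
          exact (mul_lt_mul_iff_right₀ hα₁).mpr h2
      _ = α₂ := by field_simp
  have h4 : (1 - t) ^ p ≤ 1 - t := by
    have := Real.rpow_le_rpow_of_exponent_ge (by linarith : (0:ℝ) < 1 - t)
      (by linarith : (1:ℝ) - t ≤ 1) hp.le
    simpa using this
  have h5 : α₁ * t ^ p < α₂ * t := by
    have : t ^ p = t ^ (p - 1) * t := by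
      rw [show p = (p-1)+1 by ring, Real.rpow_add htpos, Real.rpow_one]; ring_nf
    rw [this]
    calc α₁ * (t ^ (p-1) * t) = (α₁ * t ^ (p-1)) * t := by ring
      _ < α₂ * t := by exact (mul_lt_mul_iff_left₀ htpos).mpr hkey
  nlinarith [mul_le_mul_of_nonneg_left h4 hα₂.le]

lemma aux_main {X : Type*} [NormedAddCommGroup X] [NormedSpace ℝ X]
    (S₁ S₂ : Set X) (h₂ : S₂.Nonempty) (hc₂ : IsClosed S₂)
    (α₁ α₂ : ℝ) (hα₁ : 0 < α₁) (hα₂ : 0 < α₂)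
    (p : ℝ) (hp : 1 < p) (x : X)
    (hx : ∀ y : X, α₁ * infDist x S₁ ^ p + α₂ * infDist x S₂ ^ p ≤
        α₁ * infDist y S₁ ^ p + α₂ * infDist y S₂ ^ p)
    (hx1 : x ∈ S₁) (hx2 : x ∉ S₂) : False := by
  have hppos : (0:ℝ) < p := by linarith
  set d := infDist x S₂ with hd
  have hdpos : 0 < d := (hc₂.notMem_iff_infDist_pos h₂).mp hx2
  obtain ⟨t, ht0, ht1, htlt⟩ := aux_scalar α₁ α₂ hα₁ hα₂ p hp
  set c : ℝ := α₁ * t ^ p + α₂ * (1 - t) ^ p with hc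
  have hcpos : 0 < c := add_pos (mul_pos hα₁ (Real.rpow_pos_of_pos ht0 _))
    (mul_pos hα₂ (Real.rpow_pos_of_pos (by linarith) _))
  -- choose z ∈ S₂ with dist x z < d' where c * d'^p = α₂ * d^p
  set d' : ℝ := d * (α₂ / c) ^ p⁻¹ with hd'
  have hratio : (1:ℝ) < α₂ / c := (one_lt_div hcpos).mpr htlt
  have hd'gt : d < d' := by
    have : (1:ℝ) < (α₂ / c) ^ p⁻¹ := (Real.one_lt_rpow_iff_of_pos (div_pos hα₂ hcpos)).mpr
      (Or.inl ⟨hratio, inv_pos.mpr hppos⟩)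
    nlinarith
  obtain ⟨z, hz, hxz⟩ := (infDist_lt_iff h₂).mp (hd'gt)
  have hrpos : 0 < dist x z := lt_of_lt_of_le hdpos (infDist_le_dist_of_mem hz)
  set y := x + t • (z - x) with hy
  have hyx : dist y x = t * dist x z := by
    rw [dist_eq_norm, dist_eq_norm]
    have : y - x = t • (z - x) := by rw [hy]; abel
    rw [this, norm_smul, Real.norm_eq_abs, abs_of_pos ht0, ← neg_sub, norm_neg]
  have hyz : dist y z = (1 - t) * dist x z := by
    rw [dist_eq_norm, dist_eq_norm]
    have : y - z = (1 - t) • (x - z) := by rw [hy]; module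
    rw [this, norm_smul, Real.norm_eq_abs, abs_of_pos (by linarith)]
  have h1 : infDist y S₁ ≤ t * dist x z := by
    calc infDist y S₁ ≤ dist y x := infDist_le_dist_of_mem hx1
      _ = t * dist x z := hyx
  have h2 : infDist y S₂ ≤ (1 - t) * dist x z := by
    calc infDist y S₂ ≤ dist y z := infDist_le_dist_of_mem hz
      _ = (1 - t) * dist x z := hyz
  have hfy : α₁ * infDist y S₁ ^ p + α₂ * infDist y S₂ ^ p ≤ c * dist x z ^ p := by
    have e1 : infDist y S₁ ^ p ≤ (t * dist x z) ^ p :=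
      Real.rpow_le_rpow (infDist_nonneg) h1 hppos.le
    have e2 : infDist y S₂ ^ p ≤ ((1 - t) * dist x z) ^ p :=
      Real.rpow_le_rpow (infDist_nonneg) h2 hppos.le
    have m1 : (t * dist x z) ^ p = t ^ p * dist x z ^ p :=
      Real.mul_rpow ht0.le dist_nonneg
    have m2 : ((1 - t) * dist x z) ^ p = (1 - t) ^ p * dist x z ^ p :=
      Real.mul_rpow (by linarith) dist_nonneg
    rw [m1] at e1; rw [m2] at e2
    calc α₁ * infDist y S₁ ^ p + α₂ * infDist y S₂ ^ p
        ≤ α₁ * (t ^ p * dist x z ^ p) + α₂ * ((1 - t) ^ p * dist x z ^ p) := by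
          gcongr
      _ = c * dist x z ^ p := by rw [hc]; ring
  have hlt : c * dist x z ^ p < α₂ * d ^ p := by
    have e3 : dist x z ^ p < d' ^ p := Real.rpow_lt_rpow dist_nonneg hxz hppos
    have e4 : c * d' ^ p = α₂ * d ^ p := by
      rw [hd', Real.mul_rpow hdpos.le (by positivity),
        Real.rpow_inv_rpow (div_pos hα₂ hcpos).le hppos.ne']
      field_simp
    calc c * dist x z ^ p < c * d' ^ p := by gcongr
      _ = α₂ * d ^ p := e4
  have hfx : α₁ * infDist x S₁ ^ p + α₂ * infDist x S₂ ^ p = α₂ * d ^ p := by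
    rw [infDist_zero_of_mem hx1, Real.zero_rpow hppos.ne', ← hd]
    ring
  have := hx y
  rw [hfx] at this
  linarith [lt_of_le_of_lt hfy hlt]

theorem argmin_dist_pow_disjoint {X : Type*} [NormedAddCommGroup X]
    [InnerProductSpace ℝ X] [CompleteSpace X]
    (S₁ S₂ : Set X) (h₁ : S₁.Nonempty) (h₂ : S₂.Nonempty)
    (hc₁ : IsClosed S₁) (hc₂ : IsClosed S₂)
    (hv₁ : Convex ℝ S₁) (hv₂ : Convex ℝ S₂) (hdisj : S₁ ∩ S₂ = ∅)
    (α₁ α₂ : ℝ) (hα₁ : 0 < α₁) (hα₂ : 0 < α₂) (hsum : α₁ + α₂ = 1)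
    (p : ℝ) (hp : 1 < p) :
    {x : X | ∀ y : X, α₁ * infDist x S₁ ^ p + α₂ * infDist x S₂ ^ p ≤
        α₁ * infDist y S₁ ^ p + α₂ * infDist y S₂ ^ p} ∩ (S₁ ∪ S₂) = ∅ := by
  rw [Set.eq_empty_iff_forall_notMem]
  rintro x ⟨hmin, hxS⟩
  rcases hxS with hx1 | hx2
  · have hx2 : x ∉ S₂ := fun h => Set.eq_empty_iff_forall_notMem.mp hdisj x ⟨hx1, h⟩
    exact aux_main S₁ S₂ h₂ hc₂ α₁ α₂ hα₁ hα₂ p hp x hmin hx1 hx2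
  · have hx1 : x ∉ S₁ := fun h => Set.eq_empty_iff_forall_notMem.mp hdisj x ⟨h, hx2⟩
    exact aux_main S₂ S₁ h₁ hc₁ α₂ α₁ hα₂ hα₁ p hp x (fun y => by linarith [hmin y]) hx2 hx1
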